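/- Let M_R and M_I be 2×2 complex matrices, let U_D be the DQW time evolution on ℓ²(ℤ;ℂ²), and let Ũ be the 4-state LQW time evolution on ℓ²(ℤ;ℝ⁴) associated with the 4×4 real block matrix M̃ = [[ℜM_R, −ℑM_I],[ℑM_R, ℜM_I]]. Then the map ι : ℓ²(ℤ;ℂ²) → ℓ²(ℤ;ℝ⁴), (ιΨ)(x) = (ℜΨ₁(x), ℜΨ₂(x), ℑΨ₁(x), ℑΨ₂(x))ᵀ, is a bijective ℝ-linear isometry, Ũ = ι∘U_D∘ι⁻¹, and consequently for every n ≥ 0 and x ∈ ℤ, ‖(U_DⁿΨ₀)(x)‖²_{ℂ²} = ‖(Ũⁿ ιΨ₀)(x)‖²_{ℝ⁴}; that is, the DQW and its corresponding 4-state LQW have identical probability measures. -/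
import Mathlib


open Matrix

noncomputable section

/-- The time evolution `U_D = S∘C_D` of the 2-state DQW on `ℤ` with coin pair `(M_R, M_I)`. -/
def dqwU (MR MI : Matrix (Fin 2) (Fin 2) ℂ) (Ψ : ℤ → Fin 2 → ℂ) : ℤ → Fin 2 → ℂ := fun x =>
  (Matrix.of ![MR 0, (0 : Fin 2 → ℂ)]).mulVec (fun i => (((Ψ (x + 1) i).re : ℝ) : ℂ))
    + (Matrix.of ![(0 : Fin 2 → ℂ), MR 1]).mulVec (fun i => (((Ψ (x - 1) i).re : ℝ) : ℂ))
    + Complex.I •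
      ((Matrix.of ![MI 0, (0 : Fin 2 → ℂ)]).mulVec (fun i => (((Ψ (x + 1) i).im : ℝ) : ℂ))
        + (Matrix.of ![(0 : Fin 2 → ℂ), MI 1]).mulVec (fun i => (((Ψ (x - 1) i).im : ℝ) : ℂ)))

/-- The 4×4 real block matrix `M̃ = [[ℜM_R, −ℑM_I],[ℑM_R, ℜM_I]]`. -/
def Mtilde (MR MI : Matrix (Fin 2) (Fin 2) ℂ) : Matrix (Fin 4) (Fin 4) ℝ :=
  !![(MR 0 0).re, (MR 0 1).re, -(MI 0 0).im, -(MI 0 1).im;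
     (MR 1 0).re, (MR 1 1).re, -(MI 1 0).im, -(MI 1 1).im;
     (MR 0 0).im, (MR 0 1).im, (MI 0 0).re, (MI 0 1).re;
     (MR 1 0).im, (MR 1 1).im, (MI 1 0).re, (MI 1 1).re]

/-- The time evolution of the 4-state LQW on `ℤ` over `ℝ` with coin matrix `M̃`:
`(Ũψ)(x) = P̃·ψ(x+1) + Q̃·ψ(x−1)`, where `P̃` retains rows 1 and 3 of `M̃` and `Q̃`
retains rows 2 and 4. -/
def lqwU4 (M : Matrix (Fin 4) (Fin 4) ℝ) (ψ : ℤ → Fin 4 → ℝ) : ℤ → Fin 4 → ℝ := fun x =>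
  (Matrix.of ![M 0, (0 : Fin 4 → ℝ), M 2, (0 : Fin 4 → ℝ)]).mulVec (ψ (x + 1))
    + (Matrix.of ![(0 : Fin 4 → ℝ), M 1, (0 : Fin 4 → ℝ), M 3]).mulVec (ψ (x - 1))

/-- The map `ι : ℓ²(ℤ;ℂ²) → ℓ²(ℤ;ℝ⁴)`,
`(ιΨ)(x) = (ℜΨ₁(x), ℜΨ₂(x), ℑΨ₁(x), ℑΨ₂(x))ᵀ`. -/
def iota (Ψ : ℤ → Fin 2 → ℂ) : ℤ → Fin 4 → ℝ := fun x =>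
  ![(Ψ x 0).re, (Ψ x 1).re, (Ψ x 0).im, (Ψ x 1).im]

/-- Explicit inverse of `iota`. -/
def iotaInv (ψ : ℤ → Fin 4 → ℝ) : ℤ → Fin 2 → ℂ := fun x =>
  ![⟨ψ x 0, ψ x 2⟩, ⟨ψ x 1, ψ x 3⟩]

theorem iota_intertwine (MR MI : Matrix (Fin 2) (Fin 2) ℂ) (Ψ : ℤ → Fin 2 → ℂ) :
    lqwU4 (Mtilde MR MI) (iota Ψ) = iota (dqwU MR MI Ψ) := by
  funext x i
  fin_cases i <;>
    simp [lqwU4, dqwU, Mtilde, iota, Matrix.mulVec, dotProduct,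
      Fin.sum_univ_succ, Matrix.vecHead, Matrix.vecTail,
      Complex.add_re, Complex.add_im, Complex.mul_re, Complex.mul_im] <;>
    ring

/-- `ι` is a bijective ℝ-linear isometry intertwining the DQW evolution `U_D` and the 4-state
LQW evolution `Ũ` with coin `M̃`; consequently the DQW and its corresponding 4-state LQW have
identical probability measures. -/
theorem dqw_to_four_state_lqw (MR MI : Matrix (Fin 2) (Fin 2) ℂ) :
    Function.Bijective iota ∧
      (∀ Ψ Φ : ℤ → Fin 2 → ℂ, iota (Ψ + Φ) = iota Ψ + iota Φ) ∧
      (∀ (c : ℝ) (Ψ : ℤ → Fin 2 → ℂ), iota (c • Ψ) = c • iota Ψ) ∧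
      (∀ (Ψ : ℤ → Fin 2 → ℂ) (x : ℤ),
        ∑ i, Complex.normSq (Ψ x i) = ∑ i, iota Ψ x i ^ 2) ∧
      (∀ Ψ : ℤ → Fin 2 → ℂ, lqwU4 (Mtilde MR MI) (iota Ψ) = iota (dqwU MR MI Ψ)) ∧
      (∀ (Ψ₀ : ℤ → Fin 2 → ℂ) (n : ℕ) (x : ℤ),
        ∑ i, Complex.normSq (((dqwU MR MI)^[n] Ψ₀) x i)
          = ∑ i, ((lqwU4 (Mtilde MR MI))^[n] (iota Ψ₀)) x i ^ 2) := by
  have hnorm : ∀ (Ψ : ℤ → Fin 2 → ℂ) (x : ℤ),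
      ∑ i, Complex.normSq (Ψ x i) = ∑ i, iota Ψ x i ^ 2 := by
    intro Ψ x
    simp [iota, Fin.sum_univ_succ, Complex.normSq_apply]
    ring
  refine ⟨⟨?_, ?_⟩, ?_, ?_, hnorm, iota_intertwine MR MI, ?_⟩
  · intro a b h
    funext x i
    fin_cases i <;>
      [exact Complex.ext (congrFun (congrFun h x) 0) (congrFun (congrFun h x) 2);
       exact Complex.ext (congrFun (congrFun h x) 1) (congrFun (congrFun h x) 3)]
  · intro ψ
    refine ⟨iotaInv ψ, ?_⟩
    funext x i
    fin_cases i <;> simp [iota, iotaInv]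
  · intro Ψ Φ
    funext x i
    fin_cases i <;> simp [iota]
  · intro c Ψ
    funext x i
    fin_cases i <;> simp [iota]
  · intro Ψ₀ n x
    have key : ∀ m : ℕ, (lqwU4 (Mtilde MR MI))^[m] (iota Ψ₀) = iota ((dqwU MR MI)^[m] Ψ₀) := by
      intro m
      induction m with
      | zero => rfl
      | succ k ih =>
        rw [Function.iterate_succ_apply', Function.iterate_succ_apply', ih,
          iota_intertwine MR MI]
    rw [key n, hnorm]

end
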